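/- Strict monotonicity of the exponentially rescaled Hamiltonian: let T > 0, set λ := γ̄·M + 1 and define H̃(t,x,r,p,N) := −λ·r + e^{λt}·H(x, e^{−λt}·r, e^{−λt}·p, e^{−λt}·N) for t ∈ [0,T], x, p ∈ ℝ^d, r ∈ ℝ and N a symmetric d×d matrix. Then for all t ∈ [0,T], x, p ∈ ℝ^d, every symmetric d×d matrix N, and all real numbers r₁ ≤ r₂, one has H̃(t, x, r₂, p, N) − H̃(t, x, r₁, p, N) ≤ −(r₂ − r₁). -/

import Mathlib

open scoped BigOperators
open Set Filter

noncomputable section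

/-- Clamp a real number to the interval `[-1, 1]`. -/
def clamp (r : ℝ) : ℝ := max (-1) (min 1 r)

/-- Dot product on `Fin n → ℝ`. -/
def dotp {n : ℕ} (x y : Fin n → ℝ) : ℝ := ∑ i, x i * y i

/-- The clamped branching nonlinearity `G^a(x,r)`. -/
def Gb {d : ℕ} {A : Type*} (γ : (Fin d → ℝ) → A → ℝ)
    (p : ℕ → (Fin d → ℝ) → A → ℝ) (x : Fin d → ℝ) (a : A) (r : ℝ) : ℝ :=
  γ x a * ((∑' k : ℕ, p k x a * (clamp r) ^ k) - clamp r)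

/-- The Hamiltonian
`H(x,r,p,N) = inf_a { b·p + (1/2) tr(σσᵀ N) + G^a(x,r) - c(x,a) r }`. -/
def Ham {d m : ℕ} {A : Type*} (b : (Fin d → ℝ) → A → (Fin d → ℝ))
    (σ : (Fin d → ℝ) → A → (Fin d → Fin m → ℝ))
    (γ : (Fin d → ℝ) → A → ℝ) (p : ℕ → (Fin d → ℝ) → A → ℝ)
    (c : (Fin d → ℝ) → A → ℝ)
    (x : Fin d → ℝ) (r : ℝ) (q : Fin d → ℝ) (N : Fin d → Fin d → ℝ) : ℝ :=
  ⨅ a : A, (dotp (b x a) q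
      + (1 / 2) * (∑ i, ∑ j, (∑ l, σ x a i l * σ x a j l) * N j i)
      + Gb γ p x a r - c x a * r)

/-- A modulus of continuity: nondecreasing, nonnegative, tending to `0` at `0⁺`. -/
def IsModulus (ρ : ℝ → ℝ) : Prop :=
  (∀ s, 0 ≤ ρ s) ∧ Monotone ρ ∧
    Filter.Tendsto ρ (nhdsWithin 0 (Set.Ioi 0)) (nhds 0)

/-- The continuous linear map `v ↦ dotp w v` on `Fin n → ℝ`. -/
def gradCLM {n : ℕ} (w : Fin n → ℝ) : (Fin n → ℝ) →L[ℝ] ℝ :=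
  ∑ i, w i • (ContinuousLinearMap.proj i : (Fin n → ℝ) →L[ℝ] ℝ)

/-- Test function data: a candidate test function together with its time
derivative, spatial gradient and spatial Hessian. -/
structure TestData (d : ℕ) where
  φ : ℝ → (Fin d → ℝ) → ℝ
  φt : ℝ → (Fin d → ℝ) → ℝ
  Dφ : ℝ → (Fin d → ℝ) → (Fin d → ℝ)
  D2φ : ℝ → (Fin d → ℝ) → (Fin d → Fin d → ℝ)

/-- `ψ` records a function which is `C¹` in time and `C²` in space, together with
its derivatives. -/
def IsC12 {d : ℕ} (ψ : TestData d) : Prop :=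
  (∀ s y, HasDerivAt (fun τ => ψ.φ τ y) (ψ.φt s y) s) ∧
  (∀ s y, HasFDerivAt (fun z => ψ.φ s z) (gradCLM (ψ.Dφ s y)) y) ∧
  (∀ s y i, HasFDerivAt (fun z => ψ.Dφ s z i) (gradCLM (fun j => ψ.D2φ s y i j)) y) ∧
  Continuous (fun q : ℝ × (Fin d → ℝ) => ψ.φ q.1 q.2) ∧
  Continuous (fun q : ℝ × (Fin d → ℝ) => ψ.φt q.1 q.2) ∧
  Continuous (fun q : ℝ × (Fin d → ℝ) => ψ.Dφ q.1 q.2) ∧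
  Continuous (fun q : ℝ × (Fin d → ℝ) => ψ.D2φ q.1 q.2)

/-- Viscosity subsolution of `∂ₜ u + F(t, x, u, D_x u, D²_x u) = 0` on `[0,T) × ℝ^d`. -/
def IsViscSubsoln {d : ℕ} (T : ℝ)
    (F : ℝ → (Fin d → ℝ) → ℝ → (Fin d → ℝ) → (Fin d → Fin d → ℝ) → ℝ)
    (u : ℝ → (Fin d → ℝ) → ℝ) : Prop :=
  ∀ t x, 0 ≤ t → t < T → ∀ ψ : TestData d, IsC12 ψ →
    IsLocalMaxOn (fun q : ℝ × (Fin d → ℝ) => u q.1 q.2 - ψ.φ q.1 q.2)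
      (Set.Icc (0 : ℝ) T ×ˢ (Set.univ : Set (Fin d → ℝ))) (t, x) →
    u t x = ψ.φ t x →
    0 ≤ ψ.φt t x + F t x (u t x) (ψ.Dφ t x) (ψ.D2φ t x)

/-- Viscosity supersolution of `∂ₜ u + F(t, x, u, D_x u, D²_x u) = 0` on `[0,T) × ℝ^d`. -/
def IsViscSupersoln {d : ℕ} (T : ℝ)
    (F : ℝ → (Fin d → ℝ) → ℝ → (Fin d → ℝ) → (Fin d → Fin d → ℝ) → ℝ)
    (u : ℝ → (Fin d → ℝ) → ℝ) : Prop :=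
  ∀ t x, 0 ≤ t → t < T → ∀ ψ : TestData d, IsC12 ψ →
    IsLocalMinOn (fun q : ℝ × (Fin d → ℝ) => u q.1 q.2 - ψ.φ q.1 q.2)
      (Set.Icc (0 : ℝ) T ×ˢ (Set.univ : Set (Fin d → ℝ))) (t, x) →
    u t x = ψ.φ t x →
    ψ.φt t x + F t x (u t x) (ψ.Dφ t x) (ψ.D2φ t x) ≤ 0

end


section Aux

lemma clamp_mono : Monotone clamp := fun a b h => by
  unfold clamp; exact max_le_max le_rfl (min_le_min le_rfl h)

lemma clamp_mem (r : ℝ) : -1 ≤ clamp r ∧ clamp r ≤ 1 := by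
  unfold clamp
  constructor
  · exact le_max_left _ _
  · exact max_le (by norm_num) (min_le_left _ _)

lemma clamp_abs_le (r : ℝ) : |clamp r| ≤ 1 :=
  abs_le.mpr ⟨(clamp_mem r).1, (clamp_mem r).2⟩

lemma clamp_lip {a b : ℝ} (h : a ≤ b) : clamp b - clamp a ≤ b - a := by
  unfold clamp
  rcases le_total 1 a with h1 | h1
  · rw [min_eq_left h1, min_eq_left (h1.trans h)]; simp; exact h
  rcases le_total b (-1) with h2 | h2
  · rw [max_eq_left, max_eq_left] <;>
      [skip; exact min_le_of_right_le (h.trans h2); exact min_le_of_right_le h2]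
    simp; exact h
  have hb : max (-1) (min 1 b) ≤ b := max_le h2 (min_le_right _ _)
  have ha : a ≤ max (-1) (min 1 a) := le_max_of_le_right (le_min h1 le_rfl)
  linarith

lemma pow_lip {a b : ℝ} (ha : |a| ≤ 1) (hb : |b| ≤ 1) (k : ℕ) :
    |a ^ k - b ^ k| ≤ k * |a - b| := by
  induction k with
  | zero => simp
  | succ n ih =>
    have h1 : a ^ (n+1) - b ^ (n+1) = a * (a ^ n - b ^ n) + (a - b) * b ^ n := by ring
    have h2 : |a * (a ^ n - b ^ n)| ≤ n * |a - b| := by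
      rw [abs_mul]
      calc |a| * |a ^ n - b ^ n| ≤ 1 * (n * |a - b|) :=
        mul_le_mul ha ih (abs_nonneg _) one_pos.le
      _ = n * |a - b| := one_mul _
    have h3 : |(a - b) * b ^ n| ≤ |a - b| := by
      rw [abs_mul, abs_pow]
      calc |a - b| * |b| ^ n ≤ |a - b| * 1 :=
        mul_le_mul_of_nonneg_left (pow_le_one₀ (abs_nonneg _) hb) (abs_nonneg _)
      _ = |a - b| := mul_one _
    calc |a ^ (n+1) - b ^ (n+1)| ≤ |a * (a ^ n - b ^ n)| + |(a - b) * b ^ n| := by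
          rw [h1]; exact abs_add_le _ _
    _ ≤ n * |a - b| + |a - b| := add_le_add h2 h3
    _ = (n + 1 : ℕ) * |a - b| := by push_cast; ring

end Aux

/-- Strict monotonicity of the exponentially rescaled
Hamiltonian `H̃(t,x,r,p,N) = −λr + e^{λt} H(x, e^{−λt} r, e^{−λt} p, e^{−λt} N)`
with `λ = γ̄·M + 1`: for `r₁ ≤ r₂`,
`H̃(t,x,r₂,p,N) − H̃(t,x,r₁,p,N) ≤ −(r₂ − r₁)`. -/
theorem rescaled_hamiltonian_strict_monotone
    (d m : ℕ) (hd : 0 < d) (hm : 0 < m)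
    (A : Type) [Nonempty A]
    (γbar M : ℝ) (hγbar : 0 < γbar) (hM : 0 < M)
    (b : (Fin d → ℝ) → A → (Fin d → ℝ))
    (σ : (Fin d → ℝ) → A → (Fin d → Fin m → ℝ))
    (γ : (Fin d → ℝ) → A → ℝ)
    (p : ℕ → (Fin d → ℝ) → A → ℝ)
    (c : (Fin d → ℝ) → A → ℝ)
    (hb_bdd : ∃ C, ∀ x a, ‖b x a‖ ≤ C)
    (hσ_bdd : ∃ C, ∀ x a, ‖σ x a‖ ≤ C)
    (hγ : ∀ x a, γ x a ∈ Set.Icc (0 : ℝ) γbar)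
    (hp01 : ∀ k x a, p k x a ∈ Set.Icc (0 : ℝ) 1)
    (hpsum : ∀ x a, HasSum (fun k => p k x a) 1)
    (hpmean : ∀ x a, ∃ S, S ≤ M ∧ HasSum (fun k : ℕ => (k : ℝ) * p k x a) S)
    (hc0 : ∀ x a, 0 ≤ c x a) (hc_bdd : ∃ C, ∀ x a, c x a ≤ C)
    (T : ℝ) (hT : 0 < T)
    (t : ℝ) (ht : t ∈ Set.Icc (0 : ℝ) T)
    (x q : Fin d → ℝ) (N : Fin d → Fin d → ℝ) (hN : ∀ i j, N i j = N j i)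
    (r₁ r₂ : ℝ) (hr : r₁ ≤ r₂) :
    (fun (lam : ℝ) =>
        ((-lam * r₂ + Real.exp (lam * t) *
            Ham b σ γ p c x (Real.exp (-lam * t) * r₂)
              (fun i => Real.exp (-lam * t) * q i)
              (fun i j => Real.exp (-lam * t) * N i j))
          - (-lam * r₁ + Real.exp (lam * t) *
            Ham b σ γ p c x (Real.exp (-lam * t) * r₁)
              (fun i => Real.exp (-lam * t) * q i)
              (fun i j => Real.exp (-lam * t) * N i j))))
      (γbar * M + 1) ≤ -(r₂ - r₁) := by
  obtain ⟨Cb, hCb⟩ := hb_bdd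
  obtain ⟨Cσ, hCσ⟩ := hσ_bdd
  obtain ⟨Cc, hCc⟩ := hc_bdd
  have a₀ : A := Classical.arbitrary A
  have hCb0 : 0 ≤ Cb := (norm_nonneg _).trans (hCb x a₀)
  have hCσ0 : 0 ≤ Cσ := (norm_nonneg _).trans (hCσ x a₀)
  set lam : ℝ := γbar * M + 1 with hlam
  set s : ℝ := Real.exp (-lam * t) with hs
  set e : ℝ := Real.exp (lam * t) with he
  have hs0 : (0 : ℝ) < s := Real.exp_pos _
  have he0 : (0 : ℝ) < e := Real.exp_pos _
  have hes : e * s = 1 := by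
    rw [hs, he, ← Real.exp_add]
    norm_num
  set q' : Fin d → ℝ := fun i => s * q i with hq'
  set N' : Fin d → Fin d → ℝ := fun i j => s * N i j with hN'
  set F : ℝ → A → ℝ := fun r a => dotp (b x a) q'
      + (1 / 2) * (∑ i, ∑ j, (∑ l, σ x a i l * σ x a j l) * N' j i)
      + Gb γ p x a r - c x a * r with hFdef
  -- basic summability facts
  have hsump : ∀ a : A, Summable (fun k => p k x a) := fun a => (hpsum x a).summable
  have habs_term : ∀ (a : A) (χ : ℝ), |χ| ≤ 1 → ∀ k : ℕ,
      |p k x a * χ ^ k| ≤ p k x a := by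
    intro a χ hχ k
    rw [abs_mul, abs_of_nonneg (hp01 k x a).1, abs_pow]
    calc p k x a * |χ| ^ k ≤ p k x a * 1 :=
      mul_le_mul_of_nonneg_left (pow_le_one₀ (abs_nonneg _) hχ) (hp01 k x a).1
    _ = p k x a := mul_one _
  have hsumχ : ∀ (a : A) (χ : ℝ), |χ| ≤ 1 → Summable (fun k => p k x a * χ ^ k) := by
    intro a χ hχ
    exact Summable.of_norm_bounded (hsump a)
      (fun k => by rw [Real.norm_eq_abs]; exact habs_term a χ hχ k)
  have htsum_abs : ∀ (a : A) (χ : ℝ), |χ| ≤ 1 →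
      |∑' k : ℕ, p k x a * χ ^ k| ≤ 1 := by
    intro a χ hχ
    calc |∑' k : ℕ, p k x a * χ ^ k| ≤ ∑' k : ℕ, |p k x a * χ ^ k| := by
          have := norm_tsum_le_tsum_norm (f := fun k => p k x a * χ ^ k)
            ((hsumχ a χ hχ).abs)
          simp only [Real.norm_eq_abs] at this
          exact this
    _ ≤ ∑' k : ℕ, p k x a := Summable.tsum_le_tsum (habs_term a χ hχ) ((hsumχ a χ hχ).abs) (hsump a)
    _ = 1 := (hpsum x a).tsum_eq
  -- lower bound for the family
  have hLB : ∀ (r : ℝ) (a : A),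
      -(∑ i, Cb * |q' i|) - (1/2) * (∑ i, ∑ j, ((m : ℝ) * (Cσ * Cσ)) * |N' j i|)
        - 2 * γbar - max Cc 0 * |r| ≤ F r a := by
    intro r a
    have hb1 : |dotp (b x a) q'| ≤ ∑ i, Cb * |q' i| := by
      refine (Finset.abs_sum_le_sum_abs _ _).trans (Finset.sum_le_sum fun i _ => ?_)
      rw [abs_mul]
      refine mul_le_mul_of_nonneg_right ?_ (abs_nonneg _)
      exact le_trans (norm_le_pi_norm (b x a) i) (hCb x a)
    have htr : |∑ i, ∑ j, (∑ l, σ x a i l * σ x a j l) * N' j i|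
        ≤ ∑ i, ∑ j, ((m : ℝ) * (Cσ * Cσ)) * |N' j i| := by
      refine (Finset.abs_sum_le_sum_abs _ _).trans (Finset.sum_le_sum fun i _ => ?_)
      refine (Finset.abs_sum_le_sum_abs _ _).trans (Finset.sum_le_sum fun j _ => ?_)
      rw [abs_mul]
      refine mul_le_mul_of_nonneg_right ?_ (abs_nonneg _)
      calc |∑ l, σ x a i l * σ x a j l| ≤ ∑ l, |σ x a i l * σ x a j l| :=
            Finset.abs_sum_le_sum_abs _ _
      _ ≤ ∑ _l : Fin m, Cσ * Cσ := by
            refine Finset.sum_le_sum fun l _ => ?_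
            rw [abs_mul]
            have h1 : |σ x a i l| ≤ Cσ :=
              le_trans (le_trans (norm_le_pi_norm (σ x a i) l)
                (norm_le_pi_norm (σ x a) i)) (hCσ x a)
            have h2 : |σ x a j l| ≤ Cσ :=
              le_trans (le_trans (norm_le_pi_norm (σ x a j) l)
                (norm_le_pi_norm (σ x a) j)) (hCσ x a)
            exact mul_le_mul h1 h2 (abs_nonneg _) hCσ0
      _ = (m : ℝ) * (Cσ * Cσ) := by
            simp [Finset.sum_const, Finset.card_univ, nsmul_eq_mul]
    have hGblb : -(2 * γbar) ≤ Gb γ p x a r := by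
      have ht1 := htsum_abs a (clamp r) (clamp_abs_le r)
      have hc1 := clamp_abs_le r
      have hm1 : -2 ≤ (∑' k : ℕ, p k x a * (clamp r) ^ k) - clamp r := by
        have := abs_le.mp ht1
        have := abs_le.mp hc1
        unfold clamp at *
        linarith [(abs_le.mp ht1).1, (abs_le.mp hc1).2]
      have hγ0 := (hγ x a).1
      have hγ1 := (hγ x a).2
      unfold Gb
      nlinarith [hm1, hγ0, hγ1]
    have hcr : c x a * r ≤ max Cc 0 * |r| := by
      calc c x a * r ≤ |c x a * r| := le_abs_self _
      _ = c x a * |r| := by rw [abs_mul, abs_of_nonneg (hc0 x a)]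
      _ ≤ max Cc 0 * |r| :=
        mul_le_mul_of_nonneg_right ((hCc x a).trans (le_max_left _ _)) (abs_nonneg _)
    have hd1 : -(∑ i, Cb * |q' i|) ≤ dotp (b x a) q' := by
      have := neg_abs_le (dotp (b x a) q'); linarith
    have hd2 : -((1/2) * (∑ i, ∑ j, ((m : ℝ) * (Cσ * Cσ)) * |N' j i|))
        ≤ (1/2) * (∑ i, ∑ j, (∑ l, σ x a i l * σ x a j l) * N' j i) := by
      have := neg_abs_le (∑ i, ∑ j, (∑ l, σ x a i l * σ x a j l) * N' j i)
      linarith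
    rw [hFdef]
    dsimp only
    linarith
  have hbdd : ∀ r : ℝ, BddBelow (Set.range (F r)) := by
    intro r
    exact ⟨_, by rintro _ ⟨a, rfl⟩; exact hLB r a⟩
  -- key pointwise estimate
  have hsr : s * r₁ ≤ s * r₂ := mul_le_mul_of_nonneg_left hr hs0.le
  set χ₁ : ℝ := clamp (s * r₁) with hχ₁
  set χ₂ : ℝ := clamp (s * r₂) with hχ₂
  have hχle : χ₁ ≤ χ₂ := clamp_mono hsr
  have hχd : χ₂ - χ₁ ≤ s * r₂ - s * r₁ := clamp_lip hsr
  have hkey : ∀ a : A, F (s * r₂) a ≤ F (s * r₁) a + γbar * M * (s * (r₂ - r₁)) := by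
    intro a
    obtain ⟨S, hSM, hS⟩ := hpmean x a
    have hsum₂ := hsumχ a χ₂ (clamp_abs_le _)
    have hsum₁ := hsumχ a χ₁ (clamp_abs_le _)
    have hsub : HasSum (fun k : ℕ => p k x a * χ₂ ^ k - p k x a * χ₁ ^ k)
        ((∑' k : ℕ, p k x a * χ₂ ^ k) - ∑' k : ℕ, p k x a * χ₁ ^ k) :=
      hsum₂.hasSum.sub hsum₁.hasSum
    have hterm : ∀ k : ℕ, p k x a * χ₂ ^ k - p k x a * χ₁ ^ k
        ≤ ((k : ℝ) * p k x a) * (χ₂ - χ₁) := by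
      intro k
      have hpl := pow_lip (clamp_abs_le (s * r₂)) (clamp_abs_le (s * r₁)) k
      have habsd : |χ₂ - χ₁| = χ₂ - χ₁ := abs_of_nonneg (by linarith)
      rw [habsd] at hpl
      have h0 := (hp01 k x a).1
      have : p k x a * (χ₂ ^ k - χ₁ ^ k) ≤ p k x a * ((k : ℝ) * (χ₂ - χ₁)) := by
        refine mul_le_mul_of_nonneg_left ?_ h0
        exact (le_abs_self _).trans hpl
      nlinarith [this]
    have hdiff : (∑' k : ℕ, p k x a * χ₂ ^ k) - (∑' k : ℕ, p k x a * χ₁ ^ k)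
        ≤ M * (χ₂ - χ₁) := by
      have hsumS : Summable (fun k : ℕ => ((k : ℝ) * p k x a) * (χ₂ - χ₁)) :=
        hS.summable.mul_right _
      calc (∑' k : ℕ, p k x a * χ₂ ^ k) - (∑' k : ℕ, p k x a * χ₁ ^ k)
          = ∑' k : ℕ, (p k x a * χ₂ ^ k - p k x a * χ₁ ^ k) := hsub.tsum_eq.symm
      _ ≤ ∑' k : ℕ, ((k : ℝ) * p k x a) * (χ₂ - χ₁) :=
          Summable.tsum_le_tsum hterm hsub.summable hsumS
      _ = S * (χ₂ - χ₁) := by rw [tsum_mul_right, hS.tsum_eq]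
      _ ≤ M * (χ₂ - χ₁) := mul_le_mul_of_nonneg_right hSM (by linarith)
    have hGbd : Gb γ p x a (s * r₂) - Gb γ p x a (s * r₁)
        ≤ γbar * M * (s * (r₂ - r₁)) := by
      unfold Gb
      rw [← hχ₁, ← hχ₂]
      have hγ0 := (hγ x a).1
      have hγ1 := (hγ x a).2
      have hinner : ((∑' k : ℕ, p k x a * χ₂ ^ k) - χ₂)
          - ((∑' k : ℕ, p k x a * χ₁ ^ k) - χ₁) ≤ M * (χ₂ - χ₁) := by
        linarith
      have h1 : γ x a * (((∑' k : ℕ, p k x a * χ₂ ^ k) - χ₂)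
          - ((∑' k : ℕ, p k x a * χ₁ ^ k) - χ₁)) ≤ γ x a * (M * (χ₂ - χ₁)) :=
        mul_le_mul_of_nonneg_left hinner hγ0
      have h2 : γ x a * (M * (χ₂ - χ₁)) ≤ γbar * (M * (χ₂ - χ₁)) :=
        mul_le_mul_of_nonneg_right hγ1 (mul_nonneg hM.le (by linarith))
      have h3 : γbar * (M * (χ₂ - χ₁)) ≤ γbar * M * (s * (r₂ - r₁)) := by
        have hmm := mul_le_mul_of_nonneg_left hχd (mul_pos hγbar hM).le
        nlinarith [hmm]
      have h0 : γ x a * ((∑' k : ℕ, p k x a * χ₂ ^ k) - χ₂)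
          - γ x a * ((∑' k : ℕ, p k x a * χ₁ ^ k) - χ₁)
          = γ x a * (((∑' k : ℕ, p k x a * χ₂ ^ k) - χ₂)
            - ((∑' k : ℕ, p k x a * χ₁ ^ k) - χ₁)) := by ring
      linarith [h0, h1, h2, h3]
    have hcd : c x a * (s * r₁) ≤ c x a * (s * r₂) :=
      mul_le_mul_of_nonneg_left hsr (hc0 x a)
    rw [hFdef]
    dsimp only
    linarith
  -- inf inequality
  have hHam : (⨅ a : A, F (s * r₂) a) ≤ (⨅ a : A, F (s * r₁) a)
      + γbar * M * (s * (r₂ - r₁)) := by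
    rw [← sub_le_iff_le_add]
    refine le_ciInf fun a => ?_
    have h1 : (⨅ a : A, F (s * r₂) a) ≤ F (s * r₂) a := ciInf_le (hbdd _) a
    linarith [hkey a]
  have hH2 : Ham b σ γ p c x (s * r₂) q' N' = ⨅ a : A, F (s * r₂) a := rfl
  have hH1 : Ham b σ γ p c x (s * r₁) q' N' = ⨅ a : A, F (s * r₁) a := rfl
  set I₂ := ⨅ a : A, F (s * r₂) a
  set I₁ := ⨅ a : A, F (s * r₁) a
  have h2 : e * (γbar * M * (s * (r₂ - r₁))) = γbar * M * (r₂ - r₁) := by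
    have hx : e * (γbar * M * (s * (r₂ - r₁))) = (e * s) * (γbar * M * (r₂ - r₁)) := by
      ring
    rw [hx, hes, one_mul]
  have h3 : e * I₂ ≤ e * I₁ + γbar * M * (r₂ - r₁) := by
    calc e * I₂ ≤ e * (I₁ + γbar * M * (s * (r₂ - r₁))) :=
          mul_le_mul_of_nonneg_left hHam he0.le
    _ = e * I₁ + e * (γbar * M * (s * (r₂ - r₁))) := mul_add _ _ _
    _ = e * I₁ + γbar * M * (r₂ - r₁) := by rw [h2]
  show (-lam * r₂ + e * Ham b σ γ p c x (s * r₂) q' N')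
      - (-lam * r₁ + e * Ham b σ γ p c x (s * r₁) q' N') ≤ -(r₂ - r₁)
  rw [hH2, hH1]
  rw [hlam]
  linarith [h3]
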